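/- Let θ ∈ (0, π/2) and w ∈ ℝ with cos w ≠ 0 and sin w ≠ 0, and define γ : (0, ∞) → ℝ³ by γ(s) = (s·sin θ·cos w·cos(μ·ln s), s·sin θ·cos w·sin(μ·ln s), s·sin θ·sin w), where μ = cos θ/(sin θ·cos w). Then the torsion of γ satisfies τ(s) = det(γ'(s), γ''(s), γ'''(s))/‖γ''(s)‖² = cos θ·tan w/s for all s > 0, and the ratio τ(s)/κ(s) of torsion to curvature κ(s) = ‖γ''(s)‖ is constant in s (the Lancret relation holds), while neither κ nor τ is constant. -/

import Mathlib

open Real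
open scoped RealInnerProductSpace

/-- A point/vector of Euclidean 3-space. -/
noncomputable def v3 (x y z : ℝ) : EuclideanSpace ℝ (Fin 3) := !₂[x, y, z]

/-- Determinant of the 3×3 matrix with rows u, v, w. -/
noncomputable def det3 (u v w : EuclideanSpace ℝ (Fin 3)) : ℝ :=
  Matrix.det !![u 0, u 1, u 2; v 0, v 1, v 2; w 0, w 1, w 2]

lemma hasDerivAt_v3 {f1 f2 f3 : ℝ → ℝ} {f1' f2' f3' : ℝ} {s : ℝ}
    (h1 : HasDerivAt f1 f1' s) (h2 : HasDerivAt f2 f2' s) (h3 : HasDerivAt f3 f3' s) :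
    HasDerivAt (fun t => v3 (f1 t) (f2 t) (f3 t)) (v3 f1' f2' f3') s := by
  have h : HasDerivAt (fun t => (![f1 t, f2 t, f3 t] : Fin 3 → ℝ)) ![f1', f2', f3'] s := by
    rw [hasDerivAt_pi]; intro i; fin_cases i <;> simpa
  exact ((PiLp.continuousLinearEquiv 2 ℝ (fun _ : Fin 3 => ℝ)).symm.hasFDerivAt.comp_hasDerivAt s h :)

lemma det3_v3 (a b c d e f g h i : ℝ) :
    det3 (v3 a b c) (v3 d e f) (v3 g h i)
      = a * (e * i - f * h) - b * (d * i - f * g) + c * (d * h - e * g) := by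
  simp [det3, v3, Matrix.det_fin_three]
  ring

lemma norm_sq_v3 (a b c : ℝ) : ‖v3 a b c‖ ^ 2 = a ^ 2 + b ^ 2 + c ^ 2 := by
  rw [EuclideanSpace.norm_eq, Real.sq_sqrt (by positivity)]
  simp [v3, Fin.sum_univ_three, sq_abs]

noncomputable def g1 (θ w μ : ℝ) : ℝ → EuclideanSpace ℝ (Fin 3) := fun s =>
  v3 (Real.sin θ * Real.cos w * (Real.cos (μ * Real.log s) - μ * Real.sin (μ * Real.log s)))
     (Real.sin θ * Real.cos w * (Real.sin (μ * Real.log s) + μ * Real.cos (μ * Real.log s)))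
     (Real.sin θ * Real.sin w)

noncomputable def g2 (θ w μ : ℝ) : ℝ → EuclideanSpace ℝ (Fin 3) := fun s =>
  v3 (Real.sin θ * Real.cos w * μ * (-Real.sin (μ * Real.log s) - μ * Real.cos (μ * Real.log s)) / s)
     (Real.sin θ * Real.cos w * μ * (Real.cos (μ * Real.log s) - μ * Real.sin (μ * Real.log s)) / s)
     0

noncomputable def g3 (θ w μ : ℝ) : ℝ → EuclideanSpace ℝ (Fin 3) := fun s =>
  v3 (Real.sin θ * Real.cos w * μ * (1 + μ ^ 2) * Real.sin (μ * Real.log s) / s ^ 2)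
     (-(Real.sin θ * Real.cos w * μ * (1 + μ ^ 2) * Real.cos (μ * Real.log s)) / s ^ 2)
     0

lemma hd0 (θ w μ : ℝ) {s : ℝ} (hs : 0 < s) :
    HasDerivAt (fun s => v3 (s * Real.sin θ * Real.cos w * Real.cos (μ * Real.log s))
        (s * Real.sin θ * Real.cos w * Real.sin (μ * Real.log s))
        (s * Real.sin θ * Real.sin w)) (g1 θ w μ s) s := by
  have hu : HasDerivAt (fun t => μ * Real.log t) (μ * s⁻¹) s :=
    (Real.hasDerivAt_log hs.ne').const_mul μ
  have h1 := (((hasDerivAt_id s).mul_const (Real.sin θ)).mul_const (Real.cos w)).mul hu.cos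
  have h2 := (((hasDerivAt_id s).mul_const (Real.sin θ)).mul_const (Real.cos w)).mul hu.sin
  have h3 := ((hasDerivAt_id s).mul_const (Real.sin θ)).mul_const (Real.sin w)
  have e1 : Real.sin θ * Real.cos w * (Real.cos (μ * Real.log s) - μ * Real.sin (μ * Real.log s))
      = 1 * Real.sin θ * Real.cos w * Real.cos (μ * Real.log s)
        + s * Real.sin θ * Real.cos w * (-Real.sin (μ * Real.log s) * (μ * s⁻¹)) := by
    field_simp; ring
  have e2 : Real.sin θ * Real.cos w * (Real.sin (μ * Real.log s) + μ * Real.cos (μ * Real.log s))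
      = 1 * Real.sin θ * Real.cos w * Real.sin (μ * Real.log s)
        + s * Real.sin θ * Real.cos w * (Real.cos (μ * Real.log s) * (μ * s⁻¹)) := by
    field_simp
  have e3 : Real.sin θ * Real.sin w = 1 * Real.sin θ * Real.sin w := by ring
  rw [g1, e1, e2, e3]
  exact hasDerivAt_v3 h1 h2 h3

lemma hd1 (θ w μ : ℝ) {s : ℝ} (hs : 0 < s) :
    HasDerivAt (g1 θ w μ) (g2 θ w μ s) s := by
  have hu : HasDerivAt (fun t => μ * Real.log t) (μ * s⁻¹) s :=
    (Real.hasDerivAt_log hs.ne').const_mul μ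
  have h1 := (hu.cos.sub (hu.sin.const_mul μ)).const_mul (Real.sin θ * Real.cos w)
  have h2 := (hu.sin.add (hu.cos.const_mul μ)).const_mul (Real.sin θ * Real.cos w)
  have h3 := hasDerivAt_const s (Real.sin θ * Real.sin w)
  have e1 : Real.sin θ * Real.cos w * μ * (-Real.sin (μ * Real.log s) - μ * Real.cos (μ * Real.log s)) / s
      = Real.sin θ * Real.cos w *
        (-Real.sin (μ * Real.log s) * (μ * s⁻¹) - μ * (Real.cos (μ * Real.log s) * (μ * s⁻¹))) := by
    field_simp
  have e2 : Real.sin θ * Real.cos w * μ * (Real.cos (μ * Real.log s) - μ * Real.sin (μ * Real.log s)) / s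
      = Real.sin θ * Real.cos w *
        (Real.cos (μ * Real.log s) * (μ * s⁻¹) + μ * (-Real.sin (μ * Real.log s) * (μ * s⁻¹))) := by
    field_simp; ring
  rw [show g2 θ w μ s = v3 _ _ 0 from rfl, e1, e2]
  exact hasDerivAt_v3 h1 h2 h3

lemma hd2 (θ w μ : ℝ) {s : ℝ} (hs : 0 < s) :
    HasDerivAt (g2 θ w μ) (g3 θ w μ s) s := by
  have hu : HasDerivAt (fun t => μ * Real.log t) (μ * s⁻¹) s :=
    (Real.hasDerivAt_log hs.ne').const_mul μ
  have h1 := (((hu.sin.neg.sub (hu.cos.const_mul μ)).const_mul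
      (Real.sin θ * Real.cos w * μ)).div (hasDerivAt_id s) hs.ne')
  have h2 := (((hu.cos.sub (hu.sin.const_mul μ)).const_mul
      (Real.sin θ * Real.cos w * μ)).div (hasDerivAt_id s) hs.ne')
  have h3 := hasDerivAt_const s (0 : ℝ)
  have e1 : Real.sin θ * Real.cos w * μ * (1 + μ ^ 2) * Real.sin (μ * Real.log s) / s ^ 2
      = (Real.sin θ * Real.cos w * μ *
          (-(Real.cos (μ * Real.log s) * (μ * s⁻¹)) - μ * (-Real.sin (μ * Real.log s) * (μ * s⁻¹))) * id s
          - Real.sin θ * Real.cos w * μ * (-Real.sin (μ * Real.log s) - μ * Real.cos (μ * Real.log s)) * 1)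
        / id s ^ 2 := by
    simp only [id]; field_simp; ring
  have e2 : -(Real.sin θ * Real.cos w * μ * (1 + μ ^ 2) * Real.cos (μ * Real.log s)) / s ^ 2
      = (Real.sin θ * Real.cos w * μ *
          (-Real.sin (μ * Real.log s) * (μ * s⁻¹) - μ * (Real.cos (μ * Real.log s) * (μ * s⁻¹))) * id s
          - Real.sin θ * Real.cos w * μ * (Real.cos (μ * Real.log s) - μ * Real.sin (μ * Real.log s)) * 1)
        / id s ^ 2 := by
    simp only [id]; field_simp; ring
  rw [show g3 θ w μ s = v3 _ _ 0 from rfl, e1, e2]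
  exact hasDerivAt_v3 h1 h2 h3

/-- For the conical curve with ω constant (= w), the torsion is
cos θ·tan w/s, the ratio τ/κ is constant (Lancret relation), but neither the
curvature nor the torsion is constant. -/
theorem stmt_5 (θ w : ℝ) (hθ : θ ∈ Set.Ioo 0 (Real.pi / 2))
    (hw : Real.cos w ≠ 0) (hw2 : Real.sin w ≠ 0)
    (μ : ℝ) (hμ : μ = Real.cos θ / (Real.sin θ * Real.cos w))
    (γ : ℝ → EuclideanSpace ℝ (Fin 3))
    (hγ : γ = fun s => v3 (s * Real.sin θ * Real.cos w * Real.cos (μ * Real.log s))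
        (s * Real.sin θ * Real.cos w * Real.sin (μ * Real.log s))
        (s * Real.sin θ * Real.sin w))
    (κ τ : ℝ → ℝ)
    (hκ : ∀ s, κ s = ‖deriv (deriv γ) s‖)
    (hτ : ∀ s, τ s = det3 (deriv γ s) (deriv (deriv γ) s) (deriv (deriv (deriv γ)) s)
        / ‖deriv (deriv γ) s‖ ^ 2) :
    (∀ s : ℝ, 0 < s → τ s = Real.cos θ * Real.tan w / s) ∧
    (∃ a : ℝ, ∀ s : ℝ, 0 < s → τ s / κ s = a) ∧
    (¬ ∃ a : ℝ, ∀ s : ℝ, 0 < s → κ s = a) ∧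
    (¬ ∃ a : ℝ, ∀ s : ℝ, 0 < s → τ s = a) := by
  obtain ⟨hθ0, hθ1⟩ := hθ
  have hpi : Real.pi / 2 < Real.pi := by linarith [Real.pi_pos]
  have hsθ : 0 < Real.sin θ := Real.sin_pos_of_pos_of_lt_pi hθ0 (lt_trans hθ1 hpi)
  have hcθ : 0 < Real.cos θ := Real.cos_pos_of_mem_Ioo ⟨by linarith [Real.pi_pos], hθ1⟩
  have hμ0 : μ ≠ 0 := by
    rw [hμ]; exact div_ne_zero hcθ.ne' (mul_ne_zero hsθ.ne' hw)
  have hc0 : Real.sin θ * Real.cos w ≠ 0 := mul_ne_zero hsθ.ne' hw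
  -- derivative identities on (0, ∞)
  have key1 : ∀ t ∈ Set.Ioi (0:ℝ), deriv γ t = g1 θ w μ t := by
    intro t ht
    rw [hγ]
    exact (hd0 θ w μ ht).deriv
  have key2 : ∀ t ∈ Set.Ioi (0:ℝ), deriv (deriv γ) t = g2 θ w μ t := by
    intro t ht
    have hev : deriv γ =ᶠ[nhds t] g1 θ w μ :=
      Filter.eventuallyEq_of_mem (Ioi_mem_nhds ht) key1
    rw [hev.deriv_eq, (hd1 θ w μ ht).deriv]
  have key3 : ∀ t ∈ Set.Ioi (0:ℝ), deriv (deriv (deriv γ)) t = g3 θ w μ t := by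
    intro t ht
    have hev : deriv (deriv γ) =ᶠ[nhds t] g2 θ w μ :=
      Filter.eventuallyEq_of_mem (Ioi_mem_nhds ht) key2
    rw [hev.deriv_eq, (hd2 θ w μ ht).deriv]
  -- norm squared and determinant
  have hnorm : ∀ s : ℝ, 0 < s →
      ‖g2 θ w μ s‖ ^ 2 = (Real.sin θ * Real.cos w * μ) ^ 2 * (1 + μ ^ 2) / s ^ 2 := by
    intro s hs
    have hsc := Real.sin_sq_add_cos_sq (μ * Real.log s)
    rw [show g2 θ w μ s = v3 _ _ 0 from rfl, norm_sq_v3]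
    field_simp
    linear_combination (Real.sin θ * Real.cos w * μ) ^ 2 * (1 + μ ^ 2) * hsc
  have hdet : ∀ s : ℝ, 0 < s →
      det3 (g1 θ w μ s) (g2 θ w μ s) (g3 θ w μ s)
        = Real.sin θ * Real.sin w * (Real.sin θ * Real.cos w) ^ 2 * μ ^ 3 * (1 + μ ^ 2) / s ^ 3 := by
    intro s hs
    have hsc := Real.sin_sq_add_cos_sq (μ * Real.log s)
    rw [show g1 θ w μ s = v3 _ _ _ from rfl, show g2 θ w μ s = v3 _ _ 0 from rfl,
      show g3 θ w μ s = v3 _ _ 0 from rfl, det3_v3]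
    linear_combination (Real.sin θ * Real.sin w * (Real.sin θ * Real.cos w) ^ 2 * μ ^ 3 * (1 + μ ^ 2) / s ^ 3) * hsc
  -- torsion formula
  have hτval : ∀ s : ℝ, 0 < s → τ s = Real.cos θ * Real.tan w / s := by
    intro s hs
    rw [hτ s, key1 s hs, key2 s hs, key3 s hs, hnorm s hs, hdet s hs]
    rw [Real.tan_eq_sin_div_cos, hμ]
    have h1 : (1 : ℝ) + (Real.cos θ / (Real.sin θ * Real.cos w)) ^ 2 ≠ 0 := by positivity
    field_simp
  -- curvature formula
  set K : ℝ := Real.sqrt ((Real.sin θ * Real.cos w * μ) ^ 2 * (1 + μ ^ 2)) with hK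
  have hKpos : 0 < K := Real.sqrt_pos.2 (by positivity)
  have hκval : ∀ s : ℝ, 0 < s → κ s = K / s := by
    intro s hs
    rw [hκ s, key2 s hs]
    have h := hnorm s hs
    have hnn : (0:ℝ) ≤ ‖g2 θ w μ s‖ := norm_nonneg _
    have : ‖g2 θ w μ s‖ = Real.sqrt ((Real.sin θ * Real.cos w * μ) ^ 2 * (1 + μ ^ 2) / s ^ 2) := by
      rw [← h, Real.sqrt_sq hnn]
    rw [this, hK, Real.sqrt_div (by positivity), Real.sqrt_sq hs.le]
  -- non-vanishing torsion coefficient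
  have hT0 : Real.cos θ * Real.tan w ≠ 0 := by
    rw [Real.tan_eq_sin_div_cos]
    exact mul_ne_zero hcθ.ne' (div_ne_zero hw2 hw)
  refine ⟨hτval, ⟨Real.cos θ * Real.tan w / K, ?_⟩, ?_, ?_⟩
  · intro s hs
    rw [hτval s hs, hκval s hs]
    field_simp
  · rintro ⟨a, ha⟩
    have h1 := ha 1 one_pos
    have h2 := ha 2 two_pos
    rw [hκval 1 one_pos] at h1
    rw [hκval 2 two_pos] at h2
    norm_num at h1
    rw [h1] at h2
    have : K = 0 := by linarith
    exact hKpos.ne' this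
  · rintro ⟨a, ha⟩
    have h1 := ha 1 one_pos
    have h2 := ha 2 two_pos
    rw [hτval 1 one_pos] at h1
    rw [hτval 2 two_pos] at h2
    norm_num at h1
    rw [h1] at h2
    have : Real.cos θ * Real.tan w = 0 := by linarith
    exact hT0 this
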